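/- arXiv:2008.07447 — 3 statements merged into one kernel-verified Lean document; each statement's English description precedes it below -/
import Mathlib

section
/- For f = x²y² in ℂ[x,y], the exterior square ⋀²Ω¹(log f) equals (1/(x³y³))Ω², which strictly contains Ω²(log f) = (1/(x²y²))Ω². Hence for a non-reduced divisor the logarithmic differential forms need not be closed under exterior product. -/
/-!
STATEMENT 10: For `f = x²y²` in `ℂ[x,y]`, the exterior square `⋀² Ω¹(log f)` equals
`(1/(x³y³))·Ω²`, which strictly contains `Ω²(log f) = (1/(x²y²))·Ω²`.

Model: identify a meromorphic 2-form with its coefficient in the fraction field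
`K = Frac(ℂ[x,y])` (relative to `dx ∧ dy`).  A logarithmic 1-form is
`(1/f)(a dx + b dy)` with `x ∣ b` and `y ∣ a` (the computation of STATEMENT 9), and the wedge
of two such forms has coefficient `(a₁b₂ − a₂b₁)/f²`.  The `R`-submodule of `K` spanned by all
such wedge coefficients equals the span of `1/(x³y³)`, which strictly contains the span of
`1/f = 1/(x²y²)`.
-/

open MvPolynomial

noncomputable def Rpoly : Type := MvPolynomial (Fin 2) ℂ

noncomputable instance : CommRing Rpoly := inferInstanceAs (CommRing (MvPolynomial (Fin 2) ℂ))
noncomputable instance : IsDomain Rpoly := inferInstanceAs (IsDomain (MvPolynomial (Fin 2) ℂ))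

theorem wedge_of_log_one_forms_x_sq_y_sq :
    (Submodule.span Rpoly
        {w : FractionRing Rpoly | ∃ a₁ b₁ a₂ b₂ : Rpoly,
          ((X 0 : MvPolynomial (Fin 2) ℂ) ∣ b₁ ∧ (X 1 : MvPolynomial (Fin 2) ℂ) ∣ a₁) ∧
          ((X 0 : MvPolynomial (Fin 2) ℂ) ∣ b₂ ∧ (X 1 : MvPolynomial (Fin 2) ℂ) ∣ a₂) ∧
          w = algebraMap Rpoly (FractionRing Rpoly) (a₁ * b₂ - a₂ * b₁) /
              (algebraMap Rpoly (FractionRing Rpoly)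
                ((X 0 : MvPolynomial (Fin 2) ℂ) ^ 2 * X 1 ^ 2)) ^ 2} =
      Submodule.span Rpoly
        {(algebraMap Rpoly (FractionRing Rpoly)
            ((X 0 : MvPolynomial (Fin 2) ℂ) ^ 3 * X 1 ^ 3))⁻¹}) ∧
    Submodule.span Rpoly
        {(algebraMap Rpoly (FractionRing Rpoly)
            ((X 0 : MvPolynomial (Fin 2) ℂ) ^ 2 * X 1 ^ 2))⁻¹} <
      Submodule.span Rpoly
        {(algebraMap Rpoly (FractionRing Rpoly)
            ((X 0 : MvPolynomial (Fin 2) ℂ) ^ 3 * X 1 ^ 3))⁻¹} := by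
  have hinj : Function.Injective (algebraMap Rpoly (FractionRing Rpoly)) :=
    IsFractionRing.injective Rpoly (FractionRing Rpoly)
  have hx : (X 0 : Rpoly) ≠ 0 := MvPolynomial.X_ne_zero (R := ℂ) 0
  have hy : (X 1 : Rpoly) ≠ 0 := MvPolynomial.X_ne_zero (R := ℂ) 1
  have hne : ∀ p : Rpoly, p ≠ 0 → algebraMap Rpoly (FractionRing Rpoly) p ≠ 0 := fun p hp h0 =>
    hp (hinj (by simpa using h0))
  have h33 : ((X 0 : MvPolynomial (Fin 2) ℂ) ^ 3 * X 1 ^ 3) ≠ 0 :=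
    mul_ne_zero (pow_ne_zero _ hx) (pow_ne_zero _ hy)
  have h22 : ((X 0 : MvPolynomial (Fin 2) ℂ) ^ 2 * X 1 ^ 2) ≠ 0 :=
    mul_ne_zero (pow_ne_zero _ hx) (pow_ne_zero _ hy)
  have h33' := hne _ h33
  have h22' := hne _ h22
  have h44' := hne _ (pow_ne_zero 2 h22)
  refine ⟨le_antisymm ?_ ?_, lt_of_le_not_ge ?_ ?_⟩
  · rw [Submodule.span_le]
    rintro w ⟨a₁, b₁, a₂, b₂, ⟨⟨b₁', hb₁⟩, ⟨a₁', ha₁⟩⟩, ⟨⟨b₂', hb₂⟩, ⟨a₂', ha₂⟩⟩, rfl⟩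
    rw [SetLike.mem_coe, Submodule.mem_span_singleton]
    obtain ⟨c, hc⟩ : ∃ c : Rpoly, c = a₁' * b₂' - a₂' * b₁' := ⟨_, rfl⟩
    refine ⟨c, ?_⟩
    rw [Algebra.smul_def, ← div_eq_mul_inv, ← map_pow, div_eq_div_iff (by exact h33') (by exact h44'),
      ← map_mul, ← map_mul]
    apply congrArg
    subst ha₁ hb₁ ha₂ hb₂ hc
    exact (by ring : ((a₁' * b₂' - a₂' * b₁' : MvPolynomial (Fin 2) ℂ)) * (X 0 ^ 2 * X 1 ^ 2) ^ 2 =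
      (X 1 * a₁' * (X 0 * b₂') - X 1 * a₂' * (X 0 * b₁')) * (X 0 ^ 3 * X 1 ^ 3))
  · rw [Submodule.span_le]
    rintro w (rfl : w = _)
    apply Submodule.subset_span
    refine ⟨X 1, 0, 0, X 0, ⟨dvd_zero _, dvd_refl _⟩, ⟨dvd_refl _, dvd_zero _⟩, ?_⟩
    rw [inv_eq_one_div, ← map_pow, div_eq_div_iff (by exact h33') (by exact h44'), one_mul, ← map_mul]
    apply congrArg
    exact (by ring : ((X 0 : MvPolynomial (Fin 2) ℂ) ^ 2 * X 1 ^ 2) ^ 2 = (X 1 * X 0 - 0 * 0) * (X 0 ^ 3 * X 1 ^ 3))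
  · rw [Submodule.span_le]
    rintro w (rfl : w = _)
    rw [SetLike.mem_coe, Submodule.mem_span_singleton]
    refine ⟨X 0 * X 1, ?_⟩
    rw [Algebra.smul_def, ← div_eq_mul_inv, inv_eq_one_div,
      div_eq_div_iff (by exact h33') (by exact h22'), one_mul, ← map_mul]
    apply congrArg
    exact (by ring : (X 0 : MvPolynomial (Fin 2) ℂ) * X 1 * (X 0 ^ 2 * X 1 ^ 2) = X 0 ^ 3 * X 1 ^ 3)
  · intro hle
    have hmem : (algebraMap Rpoly (FractionRing Rpoly)
        ((X 0 : MvPolynomial (Fin 2) ℂ) ^ 3 * X 1 ^ 3))⁻¹ ∈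
        Submodule.span Rpoly {(algebraMap Rpoly (FractionRing Rpoly)
          ((X 0 : MvPolynomial (Fin 2) ℂ) ^ 2 * X 1 ^ 2))⁻¹} :=
      hle (Submodule.mem_span_singleton_self _)
    rw [Submodule.mem_span_singleton] at hmem
    obtain ⟨c, hc⟩ := hmem
    rw [Algebra.smul_def, ← div_eq_mul_inv, inv_eq_one_div,
      div_eq_div_iff (by exact h22') (by exact h33'), one_mul, ← map_mul] at hc
    have hpoly : (id c : MvPolynomial (Fin 2) ℂ) * (X 0 ^ 3 * X 1 ^ 3) =
        (X 0 : MvPolynomial (Fin 2) ℂ) ^ 2 * X 1 ^ 2 := hinj hc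
    have h22M : ((X 0 : MvPolynomial (Fin 2) ℂ) ^ 2 * X 1 ^ 2) ≠ 0 := h22
    have hcancel : (id c : MvPolynomial (Fin 2) ℂ) * (X 0 * X 1) = 1 :=
      mul_left_cancel₀ h22M (by rw [mul_one]; nth_rewrite 2 [← hpoly]; ring)
    have h0 := congrArg (MvPolynomial.eval (fun _ : Fin 2 => (0 : ℂ))) hcancel
    simp at h0
end

section
/- Let D be an effective divisor on a smooth complex manifold X with reduction D_red. Then there is a natural isomorphism (equality inside meromorphic forms) Ω^k_X(log D) = Ω^k_X(log D_red) ⊗ 𝒪_X(D − D_red). In particular Ω^k_X(log D) ≅ Ω^k_X(log D_red) as 𝒪_X-modules. -/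
/-!
STATEMENT 12: For an effective divisor `D` with reduction `D_red`, one has
`Ω^k_X(log D) = Ω^k_X(log D_red) ⊗ 𝒪_X(D − D_red)`; in particular
`Ω^k_X(log D) ≅ Ω^k_X(log D_red)` as `𝒪_X`-modules.

Local algebraic model: `R = ℂ[x_1,…,x_m]`, `D` is defined by `f = ∏ z_i^{n_i}` with the `z_i`
irreducible and pairwise non-associated, and `D_red` by `f_red = ∏ z_i`.  Writing a regular
`k`-form `ω` inside the exterior algebra `Λ = ⋀ R^m` and `df = ι(∇f)`, the meromorphic form
`ω/f` is logarithmic along `D` iff `df ∧ ω ∈ f·Λ`, and the claimed equality of sheaves amounts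
(after the twist by `𝒪(D − D_red)`) to: `df ∧ ω ∈ f·Λ ↔ df_red ∧ ω ∈ f_red·Λ`.
-/

open MvPolynomial

open scoped TensorProduct in
noncomputable def extBaseChangeIso (m : ℕ) (A : Type*) [CommRing A] [Algebra ℂ A] :
    ExteriorAlgebra A (Fin m → A) ≃ₗ[A] A ⊗[ℂ] ExteriorAlgebra ℂ (Fin m → ℂ) := by
  have φ : (Fin m → A) ≃ₗ[A] A ⊗[ℂ] (Fin m → ℂ) :=
    (Pi.basisFun A (Fin m)).equiv ((Pi.basisFun ℂ (Fin m)).baseChange A) (Equiv.refl _)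
  have ψ : (0 : QuadraticForm A (Fin m → A)).IsometryEquiv
      ((0 : QuadraticForm ℂ (Fin m → ℂ)).baseChange A) := by
    refine ⟨φ, ?_⟩
    have h0 : (0 : QuadraticForm ℂ (Fin m → ℂ)).baseChange A = 0 := by
      ext x
      simp
    rw [h0]
    intro x
    rfl
  exact ((CliffordAlgebra.equivOfIsometry ψ).trans
    (CliffordAlgebra.equivBaseChange A (0 : QuadraticForm ℂ (Fin m → ℂ)))).toLinearEquiv

/-- A basis of the exterior algebra of a finite free module over a `ℂ`-algebra. -/
noncomputable def extBasis (m : ℕ) (A : Type*) [CommRing A] [Algebra ℂ A] :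
    Module.Basis (Module.Free.ChooseBasisIndex ℂ (ExteriorAlgebra ℂ (Fin m → ℂ))) A
      (ExteriorAlgebra A (Fin m → A)) :=
  ((Module.Free.chooseBasis ℂ (ExteriorAlgebra ℂ (Fin m → ℂ))).baseChange A).map
    (extBaseChangeIso m A).symm

/-- Membership in `f • M` is coordinatewise divisibility. -/
lemma smul_mem_iff_dvd_repr {R M ι : Type*} [CommRing R] [AddCommGroup M] [Module R M]
    (b : Module.Basis ι R M) (f : R) (x : M) :
    (∃ τ, x = f • τ) ↔ ∀ i, f ∣ b.repr x i := by
  constructor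
  · rintro ⟨τ, rfl⟩ i
    rw [map_smul]
    exact ⟨b.repr τ i, rfl⟩
  · intro h
    classical
    choose q hq using h
    refine ⟨∑ i ∈ (b.repr x).support, q i • b i, ?_⟩
    rw [Finset.smul_sum]
    have : x = ∑ i ∈ (b.repr x).support, b.repr x i • b i := by
      conv_lhs => rw [← b.linearCombination_repr x]
      rw [Finsupp.linearCombination_apply, Finsupp.sum]
    conv_lhs => rw [this]
    refine Finset.sum_congr rfl fun i _ => ?_
    rw [smul_smul, ← hq i]

/-- Leibniz rule for a derivation applied to a finite product. -/
lemma Derivation.finsetProd {ι R A : Type*} [DecidableEq ι] [CommRing R] [CommRing A]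
    [Algebra R A] (D : Derivation R A A) (s : Finset ι) (g : ι → A) :
    D (∏ j ∈ s, g j) = ∑ j ∈ s, (∏ k ∈ s.erase j, g k) * D (g j) := by
  induction s using Finset.induction_on with
  | empty => simp
  | @insert a s ha ih =>
    rw [Finset.prod_insert ha, D.leibniz, Finset.sum_insert ha, Finset.erase_insert ha,
      smul_eq_mul, smul_eq_mul, ih, Finset.mul_sum, add_comm]
    congr 1
    refine Finset.sum_congr rfl fun j hj => ?_
    rw [Finset.erase_insert_of_ne (by rintro rfl; exact ha hj),
      Finset.prod_insert (fun h => ha (Finset.mem_of_mem_erase h)), ← mul_assoc]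

section scalars

variable {R : Type*} [CommRing R] [IsDomain R]

/-- Key scalar lemma. -/
lemma key_dvd_iff {t : ℕ} (z : Fin t → R) (hz : ∀ i, Prime (z i))
    (hcop : ∀ i j, i ≠ j → ¬ Associated (z i) (z j))
    (c : Fin t → R) (hc : ∀ j, ¬ z j ∣ c j) (a : Fin t → R) :
    ((∏ j, z j) ∣ ∑ j, c j * (∏ k ∈ Finset.univ.erase j, z k) * a j) ↔ ∀ j, z j ∣ a j := by
  constructor
  · intro h j
    have hzj : z j ∣ ∑ i, c i * (∏ k ∈ Finset.univ.erase i, z k) * a i :=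
      dvd_trans (Finset.dvd_prod_of_mem z (Finset.mem_univ j)) h
    have hrest : z j ∣ ∑ i ∈ Finset.univ.erase j, c i * (∏ k ∈ Finset.univ.erase i, z k) * a i := by
      refine Finset.dvd_sum fun i hi => ?_
      have hij : j ≠ i := fun e => (Finset.mem_erase.mp hi).1 e.symm
      have : z j ∣ ∏ k ∈ Finset.univ.erase i, z k :=
        Finset.dvd_prod_of_mem z (Finset.mem_erase.mpr ⟨hij, Finset.mem_univ j⟩)
      exact (this.mul_left _).mul_right _
    have hterm : z j ∣ c j * (∏ k ∈ Finset.univ.erase j, z k) * a j := by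
      have := dvd_sub hzj hrest
      rwa [← Finset.sum_erase_add _ _ (Finset.mem_univ j), add_sub_cancel_left] at this
    rcases (hz j).dvd_mul.mp hterm with h1 | h2
    · rcases (hz j).dvd_mul.mp h1 with h3 | h4
      · exact absurd h3 (hc j)
      · exfalso
        obtain ⟨k, hk, hdvd⟩ := (hz j).exists_mem_finset_dvd h4
        exact hcop j k (Ne.symm (Finset.mem_erase.mp hk).1)
          ((hz j).associated_of_dvd (hz k) hdvd)
    · exact h2
  · intro h
    refine Finset.dvd_sum fun j _ => ?_
    obtain ⟨b, hb⟩ := h j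
    refine ⟨c j * b, ?_⟩
    calc c j * (∏ k ∈ Finset.univ.erase j, z k) * a j
        = c j * (∏ k ∈ Finset.univ.erase j, z k) * (z j * b) := by rw [hb]
      _ = ((∏ k ∈ Finset.univ.erase j, z k) * z j) * (c j * b) := by ring
      _ = (∏ j, z j) * (c j * b) := by rw [Finset.prod_erase_mul _ _ (Finset.mem_univ j)]

end scalars

section graddecomp

set_option synthInstance.maxHeartbeats 1000000 in
set_option maxHeartbeats 2000000 in
lemma grad_decomp (m t : ℕ) (z : Fin t → MvPolynomial (Fin m) ℂ) (e : Fin t → ℕ)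
    (he : ∀ i, 1 ≤ e i)
    (ω : ExteriorAlgebra (MvPolynomial (Fin m) ℂ) (Fin m → MvPolynomial (Fin m) ℂ)) :
    (ExteriorAlgebra.ι (MvPolynomial (Fin m) ℂ) (fun i => pderiv i (∏ j, z j ^ e j))) * ω
      = ∑ j, ((e j : MvPolynomial (Fin m) ℂ) * (∏ k, z k ^ (e k - 1))
          * (∏ k ∈ Finset.univ.erase j, z k))
        • ((ExteriorAlgebra.ι (MvPolynomial (Fin m) ℂ) (fun i => pderiv i (z j))) * ω) := by
  classical
  have hs : ∀ j : Fin t, (∏ k ∈ Finset.univ.erase j, z k ^ e k) * z j ^ (e j - 1)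
      = (∏ k, z k ^ (e k - 1)) * ∏ k ∈ Finset.univ.erase j, z k := by
    intro j
    have h1 : (∏ k ∈ Finset.univ.erase j, z k ^ e k)
        = (∏ k ∈ Finset.univ.erase j, z k ^ (e k - 1)) * ∏ k ∈ Finset.univ.erase j, z k := by
      rw [← Finset.prod_mul_distrib]
      refine Finset.prod_congr rfl fun k _ => ?_
      rw [← pow_succ, Nat.sub_add_cancel (he k)]
    have h2 : (∏ k ∈ Finset.univ.erase j, z k ^ (e k - 1)) * z j ^ (e j - 1)
        = ∏ k, z k ^ (e k - 1) :=
      Finset.prod_erase_mul _ _ (Finset.mem_univ j)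
    calc (∏ k ∈ Finset.univ.erase j, z k ^ e k) * z j ^ (e j - 1)
        = ((∏ k ∈ Finset.univ.erase j, z k ^ (e k - 1)) * z j ^ (e j - 1))
            * ∏ k ∈ Finset.univ.erase j, z k := by rw [h1]; ring
      _ = (∏ k, z k ^ (e k - 1)) * ∏ k ∈ Finset.univ.erase j, z k := by rw [h2]
  have hv : (fun i => pderiv i (∏ j, z j ^ e j))
      = ∑ j, ((e j : MvPolynomial (Fin m) ℂ) * (∏ k, z k ^ (e k - 1))
          * (∏ k ∈ Finset.univ.erase j, z k)) • (fun i => pderiv i (z j)) := by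
    funext i
    rw [Finset.sum_apply]
    rw [Derivation.finsetProd (pderiv i) Finset.univ (fun j => z j ^ e j)]
    refine Finset.sum_congr rfl fun j _ => ?_
    rw [Pi.smul_apply, smul_eq_mul, Derivation.leibniz_pow, nsmul_eq_mul, smul_eq_mul]
    calc (∏ k ∈ Finset.univ.erase j, z k ^ e k)
          * ((e j : MvPolynomial (Fin m) ℂ) * (z j ^ (e j - 1) * pderiv i (z j)))
        = ((∏ k ∈ Finset.univ.erase j, z k ^ e k) * z j ^ (e j - 1))
            * ((e j : MvPolynomial (Fin m) ℂ) * pderiv i (z j)) := by ring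
      _ = _ := by rw [hs j]; ring
  rw [hv, map_sum, Finset.sum_mul]
  exact Finset.sum_congr rfl fun j _ => by rw [map_smul, smul_mul_assoc]

end graddecomp

set_option synthInstance.maxHeartbeats 1000000 in
set_option maxHeartbeats 4000000 in
theorem log_forms_nonreduced_eq_reduced_twist
    (m t : ℕ) (z : Fin t → MvPolynomial (Fin m) ℂ)
    (hirr : ∀ i, Irreducible (z i))
    (hcop : ∀ i j, i ≠ j → ¬ Associated (z i) (z j))
    (n : Fin t → ℕ) (hn : ∀ i, 1 ≤ n i)
    (ω : ExteriorAlgebra (MvPolynomial (Fin m) ℂ) (Fin m → MvPolynomial (Fin m) ℂ)) :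
    (∃ τ, (ExteriorAlgebra.ι (MvPolynomial (Fin m) ℂ)
          (fun i => pderiv i (∏ j, z j ^ n j))) * ω = (∏ j, z j ^ n j) • τ) ↔
      (∃ τ, (ExteriorAlgebra.ι (MvPolynomial (Fin m) ℂ)
          (fun i => pderiv i (∏ j, z j))) * ω = (∏ j, z j) • τ) := by
  classical
  have hzprime : ∀ i, Prime (z i) := fun i =>
    UniqueFactorizationMonoid.irreducible_iff_prime.mp (hirr i)
  set b := extBasis m (MvPolynomial (Fin m) ℂ) with hb
  set A : Fin t → ExteriorAlgebra (MvPolynomial (Fin m) ℂ) (Fin m → (MvPolynomial (Fin m) ℂ)) :=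
    fun j => (ExteriorAlgebra.ι (MvPolynomial (Fin m) ℂ) (fun i => pderiv i (z j))) * ω with hA
  set a : Fin t → _ → (MvPolynomial (Fin m) ℂ) := fun j i => b.repr (A j) i with ha
  set G : (MvPolynomial (Fin m) ℂ) := ∏ k, z k ^ (n k - 1) with hG
  set fred : (MvPolynomial (Fin m) ℂ) := ∏ k, z k with hfred
  have hG0 : G ≠ 0 := by
    refine Finset.prod_ne_zero_iff.mpr fun k _ => pow_ne_zero _ (hzprime k).ne_zero
  -- coordinates of a twisted sum
  have hrepr : ∀ (c : Fin t → (MvPolynomial (Fin m) ℂ)) (i),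
      b.repr (∑ j, c j • A j) i = ∑ j, c j * a j i := by
    intro c i
    rw [map_sum, Finset.sum_apply']
    exact Finset.sum_congr rfl fun j _ => by rw [map_smul, Finsupp.smul_apply, smul_eq_mul]
  -- the key characterization, for both divisors
  have key : ∀ (c : Fin t → (MvPolynomial (Fin m) ℂ)), (∀ j, ¬ z j ∣ c j) → ∀ i,
      ((fred ∣ ∑ j, c j * (∏ k ∈ Finset.univ.erase j, z k) * a j i) ↔ ∀ j, z j ∣ a j i) :=
    fun c hc i => key_dvd_iff z hzprime hcop c hc (fun j => a j i)
  constructor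
  · intro h
    -- unpack hypothesis
    rw [grad_decomp m t z n hn ω] at h
    rw [smul_mem_iff_dvd_repr b] at h
    have hf : (∏ j, z j ^ n j) = G * fred := by
      rw [hG, hfred, ← Finset.prod_mul_distrib]
      exact Finset.prod_congr rfl fun j _ => by rw [← pow_succ, Nat.sub_add_cancel (hn j)]
    have hforward : ∀ j i, z j ∣ a j i := by
      intro j i
      have h1 := h i
      rw [hrepr] at h1
      have h2 : (∑ j, ((n j : (MvPolynomial (Fin m) ℂ)) * G * (∏ k ∈ Finset.univ.erase j, z k)) * a j i)
          = G * ∑ j, (n j : (MvPolynomial (Fin m) ℂ)) * (∏ k ∈ Finset.univ.erase j, z k) * a j i := by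
        rw [Finset.mul_sum]
        exact Finset.sum_congr rfl fun j _ => by ring
      rw [h2, hf] at h1
      have h3 : fred ∣ ∑ j, (n j : (MvPolynomial (Fin m) ℂ)) * (∏ k ∈ Finset.univ.erase j, z k) * a j i :=
        (mul_dvd_mul_iff_left hG0).mp h1
      have hc : ∀ j, ¬ z j ∣ (n j : (MvPolynomial (Fin m) ℂ)) := by
        intro j hdvd
        have hu : IsUnit ((n j : ℕ) : (MvPolynomial (Fin m) ℂ)) := by
          rw [show ((n j : ℕ) : (MvPolynomial (Fin m) ℂ)) = C ((n j : ℕ) : ℂ) by push_cast; rfl]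
          exact (isUnit_iff_ne_zero.mpr
            (Nat.cast_ne_zero.mpr (Nat.one_le_iff_ne_zero.mp (hn j)))).map C
        exact (hzprime j).not_unit (isUnit_of_dvd_unit hdvd hu)
      exact (key _ hc i).mp h3 j
    -- build reduced statement
    have hred : ∀ i, fred ∣ b.repr
        ((ExteriorAlgebra.ι (MvPolynomial (Fin m) ℂ) (fun i => pderiv i (∏ j, z j))) * ω) i := by
      intro i
      have hone : (∏ j, z j) = ∏ j, z j ^ (fun _ : Fin t => 1) j := by simp
      rw [hone, grad_decomp m t z (fun _ => 1) (fun _ => le_refl 1) ω, hrepr]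
      have h2 : (∑ j, (((1:ℕ) : (MvPolynomial (Fin m) ℂ)) * (∏ k, z k ^ (1 - 1))
            * (∏ k ∈ Finset.univ.erase j, z k)) * a j i)
          = ∑ j, (1 : (MvPolynomial (Fin m) ℂ)) * (∏ k ∈ Finset.univ.erase j, z k) * a j i := by
        refine Finset.sum_congr rfl fun j _ => by simp
      rw [h2]
      refine (key (fun _ => (1:(MvPolynomial (Fin m) ℂ))) (fun j hd => (hzprime j).not_unit (isUnit_of_dvd_one hd)) i).mpr
        (fun j => hforward j i)
    exact (smul_mem_iff_dvd_repr b fred _).mpr hred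
  · intro h
    rw [hfred] at h
    have hone : (∏ j, z j) = ∏ j, z j ^ (fun _ : Fin t => 1) j := by simp
    rw [hone, grad_decomp m t z (fun _ => 1) (fun _ => le_refl 1) ω,
      smul_mem_iff_dvd_repr b] at h
    have hbackward : ∀ j i, z j ∣ a j i := by
      intro j i
      have h1 := h i
      rw [hrepr] at h1
      have h2 : (∑ j, (((1:ℕ) : (MvPolynomial (Fin m) ℂ)) * (∏ k, z k ^ (1 - 1))
            * (∏ k ∈ Finset.univ.erase j, z k)) * a j i)
          = ∑ j, (1 : (MvPolynomial (Fin m) ℂ)) * (∏ k ∈ Finset.univ.erase j, z k) * a j i := by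
        refine Finset.sum_congr rfl fun j _ => by simp
      rw [h2] at h1
      have h3 : fred ∣ ∑ j, (1:(MvPolynomial (Fin m) ℂ)) * (∏ k ∈ Finset.univ.erase j, z k) * a j i := by
        simpa [hfred] using h1
      exact (key (fun _ => (1:(MvPolynomial (Fin m) ℂ))) (fun j hd => (hzprime j).not_unit (isUnit_of_dvd_one hd)) i).mp
        h3 j
    rw [grad_decomp m t z n hn ω, smul_mem_iff_dvd_repr b]
    intro i
    have hf : (∏ j, z j ^ n j) = G * fred := by
      rw [hG, hfred, ← Finset.prod_mul_distrib]
      exact Finset.prod_congr rfl fun j _ => by rw [← pow_succ, Nat.sub_add_cancel (hn j)]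
    rw [hrepr, hf]
    have h2 : (∑ j, ((n j : (MvPolynomial (Fin m) ℂ)) * G * (∏ k ∈ Finset.univ.erase j, z k)) * a j i)
        = G * ∑ j, (n j : (MvPolynomial (Fin m) ℂ)) * (∏ k ∈ Finset.univ.erase j, z k) * a j i := by
      rw [Finset.mul_sum]
      exact Finset.sum_congr rfl fun j _ => by ring
    rw [h2]
    exact mul_dvd_mul_left G ((key (fun j => (n j : (MvPolynomial (Fin m) ℂ))) (by
      intro j hdvd
      have hu : IsUnit ((n j : ℕ) : (MvPolynomial (Fin m) ℂ)) := by
        rw [show ((n j : ℕ) : (MvPolynomial (Fin m) ℂ)) = C ((n j : ℕ) : ℂ) by push_cast; rfl]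
        exact (isUnit_iff_ne_zero.mpr
          (Nat.cast_ne_zero.mpr (Nat.one_le_iff_ne_zero.mp (hn j)))).map C
      exact (hzprime j).not_unit (isUnit_of_dvd_unit hdvd hu)) i).mpr (fun j => hbackward j i))
end

section
/- Let D be an effective divisor with reduction D_red. Then Ω⁰_X(log D) = 𝒪_X(D − D_red); i.e. a meromorphic function g with poles bounded by D satisfies dg having poles bounded by D if and only if g has poles bounded by D − D_red. -/
/-!
STATEMENT 13: For an effective divisor `D` with reduction `D_red`,
`Ω⁰_X(log D) = 𝒪_X(D − D_red)`: a meromorphic function `g` with poles bounded by `D` has `dg`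
with poles bounded by `D` if and only if `g` has poles bounded by `D − D_red`.

Local algebraic model: `R = ℂ[x_1,…,x_m]`, `f = ∏ z_i^{n_i}` (the `z_i` irreducible, pairwise
non-associated, `n_i ≥ 1`), `f_red = ∏ z_i`.  A meromorphic function with poles bounded by `D`
is `g = a/f` with `a ∈ R`; then `dg` has poles bounded by `D` iff `f ∣ a·∂_i f` for all `i`,
and `g` has poles bounded by `D − D_red` iff `f_red ∣ a`.  The statement is the equivalence
of these two conditions.
-/

open MvPolynomial

section


-- coefficient formula for pderiv over ℂ
lemma my_coeff_pderiv {m : ℕ} (i : Fin m) (f : MvPolynomial (Fin m) ℂ) (s : Fin m →₀ ℕ) :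
    coeff s (pderiv i f) = ((s i + 1 : ℕ) : ℂ) * coeff (s + Finsupp.single i 1) f := by
  induction f using MvPolynomial.induction_on' with
  | add p q hp hq =>
      rw [map_add, coeff_add, coeff_add, hp, hq, mul_add]
  | monomial u b =>
      rw [pderiv_monomial, coeff_monomial, coeff_monomial]
      split_ifs with h1 h2 h2
      · have hui : u i = s i + 1 := by
          rw [h2, Finsupp.add_apply, Finsupp.single_apply, if_pos rfl]
        rw [hui]; push_cast; ring
      · -- u - single i 1 = s, u ≠ s + single i 1 : then u i = 0
        have hui : u i = 0 := by
          by_contra hne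
          apply h2
          rw [← h1, tsub_add_cancel_of_le]
          rwa [Finsupp.single_le_iff, Nat.one_le_iff_ne_zero]
        rw [hui]; simp
      · exfalso; apply h1; rw [h2, add_tsub_cancel_right]
      · simp

-- degreeOf is additive on products of nonzero polynomials (over ℂ, Fin (m+1) variables)
lemma my_degreeOf_mul {m : ℕ} (i : Fin (m + 1)) (f g : MvPolynomial (Fin (m + 1)) ℂ)
    (hf : f ≠ 0) (hg : g ≠ 0) :
    degreeOf i (f * g) = degreeOf i f + degreeOf i g := by
  have key : ∀ p : MvPolynomial (Fin (m + 1)) ℂ,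
      degreeOf i p = degreeOf 0 (rename (Equiv.swap i 0) p) := by
    intro p
    have h := degreeOf_rename_of_injective (p := p) (Equiv.swap i 0).injective i
    rw [Equiv.swap_apply_left] at h
    exact h.symm
  have hren : ∀ p : MvPolynomial (Fin (m + 1)) ℂ, p ≠ 0 → rename (Equiv.swap i 0) p ≠ 0 :=
    fun p hp => by
      simpa using (map_ne_zero_iff _ (rename_injective _ (Equiv.swap i 0).injective)).mpr hp
  rw [key, key, key, map_mul]
  rw [← natDegree_finSuccEquiv, ← natDegree_finSuccEquiv, ← natDegree_finSuccEquiv, map_mul]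
  exact Polynomial.natDegree_mul
    ((map_ne_zero_iff _ (finSuccEquiv ℂ m).injective).mpr (hren f hf))
    ((map_ne_zero_iff _ (finSuccEquiv ℂ m).injective).mpr (hren g hg))

-- pderiv i z ≠ 0 and z ∤ pderiv i z, given a monomial of z with positive i-exponent
lemma my_pderiv_ne_zero {m : ℕ} (i : Fin m) (z : MvPolynomial (Fin m) ℂ)
    {s : Fin m →₀ ℕ} (hs : s ∈ z.support) (hsi : s i ≠ 0) :
    pderiv i z ≠ 0 := by
  intro h
  have hle : Finsupp.single i 1 ≤ s := by
    rwa [Finsupp.single_le_iff, Nat.one_le_iff_ne_zero]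
  have hcoeff := my_coeff_pderiv i z (s - Finsupp.single i 1)
  rw [h, coeff_zero, tsub_add_cancel_of_le hle] at hcoeff
  have h1 : ((s - Finsupp.single i 1 : Fin m →₀ ℕ)) i + 1 = s i := by
    rw [Finsupp.tsub_apply, Finsupp.single_eq_same]
    omega
  rw [h1] at hcoeff
  have := MvPolynomial.mem_support_iff.mp hs
  exact this (by
    have hne : ((s i : ℕ) : ℂ) ≠ 0 := Nat.cast_ne_zero.mpr hsi
    field_simp at hcoeff
    exact (mul_eq_zero.mp hcoeff.symm).resolve_left hne)

lemma my_support_pderiv_lt {m : ℕ} (i : Fin m) (z : MvPolynomial (Fin m) ℂ)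
    {s : Fin m →₀ ℕ} (hs : s ∈ (pderiv i z).support) :
    s i + 1 ≤ degreeOf i z := by
  have hc := MvPolynomial.mem_support_iff.mp hs
  rw [my_coeff_pderiv] at hc
  have h2 : coeff (s + Finsupp.single i 1) z ≠ 0 := by
    intro h; rw [h, mul_zero] at hc; exact hc rfl
  have hmem : s + Finsupp.single i 1 ∈ z.support := MvPolynomial.mem_support_iff.mpr h2
  have h3 : ((s + Finsupp.single i 1 : Fin m →₀ ℕ)) i ≤ degreeOf i z := by
    rw [degreeOf_eq_sup]; exact Finset.le_sup (f := fun u : Fin m →₀ ℕ => u i) hmem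
  simpa [Finsupp.add_apply, Finsupp.single_apply] using h3

lemma my_not_dvd_pderiv {m : ℕ} (i : Fin (m + 1)) (z : MvPolynomial (Fin (m + 1)) ℂ)
    {s : Fin (m + 1) →₀ ℕ} (hs : s ∈ z.support) (hsi : s i ≠ 0) :
    ¬ z ∣ pderiv i z := by
  rintro ⟨w, hw⟩
  have hpd : pderiv i z ≠ 0 := my_pderiv_ne_zero i z hs hsi
  have hz : z ≠ 0 := fun h => by simp [h] at hpd
  have hw0 : w ≠ 0 := fun h => hpd (by rw [hw, h, mul_zero])
  have hd : 1 ≤ degreeOf i z := by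
    have h' : s i ≤ degreeOf i z := by
      rw [degreeOf_eq_sup]; exact Finset.le_sup (f := fun u : Fin (m+1) →₀ ℕ => u i) hs
    omega
  have hlt : degreeOf i (pderiv i z) < degreeOf i z := by
    rw [degreeOf_eq_sup]
    rw [Finset.sup_lt_iff (by simp only [bot_eq_zero']; omega : (⊥ : ℕ) < degreeOf i z)]
    intro b hb
    have := my_support_pderiv_lt i z hb
    omega
  rw [hw, my_degreeOf_mul i z w hz hw0] at hlt
  omega

lemma my_prod_dvd {m t : ℕ} (z : Fin t → MvPolynomial (Fin m) ℂ)
    (hz : ∀ k, Prime (z k)) (hcop : ∀ i j, i ≠ j → ¬ Associated (z i) (z j))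
    (N : Fin t → ℕ) :
    ∀ (s : Finset (Fin t)) (c : MvPolynomial (Fin m) ℂ),
      (∀ k ∈ s, z k ^ N k ∣ c) → (∏ k ∈ s, z k ^ N k) ∣ c := by
  intro s
  induction s using Finset.induction_on with
  | empty => simp
  | insert k s hk ih =>
    intro c hc
    obtain ⟨b, rfl⟩ := hc k (Finset.mem_insert_self k s)
    have hb : ∀ j ∈ s, z j ^ N j ∣ b := by
      intro j hj
      refine (hz j).pow_dvd_of_dvd_mul_left _ ?_ (hc j (Finset.mem_insert_of_mem hj))
      intro hdvd
      have hjk : z j ∣ z k := (hz j).dvd_of_dvd_pow hdvd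
      exact hcop j k (fun h => hk (h ▸ hj)) ((hz j).associated_of_dvd (hz k) hjk)
    rw [Finset.prod_insert hk]
    exact mul_dvd_mul_left _ (ih b hb)


theorem zero_log_forms_eq_twist
    (m t : ℕ) (z : Fin t → MvPolynomial (Fin m) ℂ)
    (hirr : ∀ i, Irreducible (z i))
    (hcop : ∀ i j, i ≠ j → ¬ Associated (z i) (z j))
    (n : Fin t → ℕ) (hn : ∀ i, 1 ≤ n i)
    (a : MvPolynomial (Fin m) ℂ) :
    (∀ i : Fin m, (∏ j, z j ^ n j) ∣ a * pderiv i (∏ j, z j ^ n j)) ↔ (∏ j, z j) ∣ a := by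
  classical
  have hprime : ∀ k, Prime (z k) :=
    fun k => UniqueFactorizationMonoid.irreducible_iff_prime.mp (hirr k)
  have hz0 : ∀ k, z k ≠ 0 := fun k => (hprime k).ne_zero
  -- the erased products
  have hfact : ∀ k : Fin t, (∏ j, z j ^ n j)
      = z k ^ n k * ∏ j ∈ Finset.univ.erase k, z j ^ n j :=
    fun k => (Finset.mul_prod_erase _ _ (Finset.mem_univ k)).symm
  have hzg : ∀ k : Fin t, ¬ z k ∣ ∏ j ∈ Finset.univ.erase k, z j ^ n j := by
    intro k hd
    obtain ⟨j, hj, hdj⟩ := (hprime k).exists_mem_finset_dvd hd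
    have hjk : j ≠ k := (Finset.mem_erase.mp hj).1
    exact hcop k j (Ne.symm hjk)
      ((hprime k).associated_of_dvd (hprime j) ((hprime k).dvd_of_dvd_pow hdj))
  constructor
  · intro h
    have hka : ∀ k, z k ∣ a := by
      intro k
      -- z k is nonconstant: it has a monomial s ≠ 0
      obtain ⟨s, hs, hs0⟩ : ∃ s ∈ (z k).support, s ≠ 0 := by
        by_contra hcon
        push_neg at hcon
        have hC : z k = C (coeff 0 (z k)) := by
          ext s'
          rw [coeff_C]
          by_cases h0 : s' = 0
          · subst h0; simp
          · rw [if_neg (fun hh => h0 hh.symm)]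
            by_contra hne
            exact h0 (hcon s' (MvPolynomial.mem_support_iff.mpr hne))
        have hc0 : coeff 0 (z k) ≠ 0 := fun hcc => hz0 k (by rw [hC, hcc, map_zero])
        exact (hirr k).not_isUnit
          (hC ▸ (IsUnit.map (C : ℂ →+* MvPolynomial (Fin m) ℂ)
            (isUnit_iff_ne_zero.mpr hc0)))
      obtain ⟨i, hsi⟩ : ∃ i, s i ≠ 0 := by
        by_contra hcon; push_neg at hcon; exact hs0 (Finsupp.ext hcon)
      obtain ⟨m', rfl⟩ : ∃ m'', m = m'' + 1 := ⟨m - 1, by have := i.pos; omega⟩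
      set g := ∏ j ∈ Finset.univ.erase k, z j ^ n j with hg
      have hdvd := h i
      rw [hfact k, pderiv_mul, pderiv_pow] at hdvd
      -- extract the relevant summand
      have h1 : z k ^ n k ∣ a * (((n k : MvPolynomial (Fin (m' + 1)) ℂ))
          * z k ^ (n k - 1) * pderiv i (z k) * g) := by
        have h2 : z k ^ n k ∣ a * (z k ^ n k * pderiv i g) :=
          ⟨a * pderiv i g, by ring⟩
        have h3 : z k ^ n k ∣ a * ((n k : MvPolynomial (Fin (m' + 1)) ℂ)
              * z k ^ (n k - 1) * pderiv i (z k) * g + z k ^ n k * pderiv i g) :=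
          dvd_trans (dvd_mul_right _ g) hdvd
        have heq : a * (((n k : MvPolynomial (Fin (m' + 1)) ℂ))
            * z k ^ (n k - 1) * pderiv i (z k) * g)
            = a * ((n k : MvPolynomial (Fin (m' + 1)) ℂ)
              * z k ^ (n k - 1) * pderiv i (z k) * g + z k ^ n k * pderiv i g)
              - a * (z k ^ n k * pderiv i g) := by ring
        rw [heq]
        exact dvd_sub h3 h2
      have hpow : z k ^ n k = z k ^ (n k - 1) * z k := by
        rw [← pow_succ]
        congr 1
        have := hn k
        omega
      have h5 : z k ∣ a * (n k : MvPolynomial (Fin (m' + 1)) ℂ) * pderiv i (z k) * g := by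
        have hcalc : a * (((n k : MvPolynomial (Fin (m' + 1)) ℂ))
            * z k ^ (n k - 1) * pderiv i (z k) * g)
            = z k ^ (n k - 1) * (a * (n k : MvPolynomial (Fin (m' + 1)) ℂ)
              * pderiv i (z k) * g) := by ring
        rw [hcalc, hpow] at h1
        exact (mul_dvd_mul_iff_left (pow_ne_zero _ (hz0 k) : z k ^ (n k - 1) ≠ 0)).mp h1
      -- prime analysis
      rcases (hprime k).dvd_or_dvd h5 with h6 | h6
      swap
      · exact absurd h6 (hzg k)
      rcases (hprime k).dvd_or_dvd h6 with h7 | h7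
      swap
      · exact absurd h7 (my_not_dvd_pderiv i (z k) hs hsi)
      rcases (hprime k).dvd_or_dvd h7 with h8 | h8
      · exact h8
      · exfalso
        have hu : IsUnit ((n k : MvPolynomial (Fin (m' + 1)) ℂ)) := by
          rw [← MvPolynomial.C_eq_coe_nat]
          exact IsUnit.map (C : ℂ →+* MvPolynomial (Fin (m' + 1)) ℂ)
            (isUnit_iff_ne_zero.mpr (Nat.cast_ne_zero.mpr (by have := hn k; omega)))
        exact (hirr k).not_isUnit (isUnit_of_dvd_unit h8 hu)
    have := my_prod_dvd z hprime hcop (fun _ => 1) Finset.univ a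
      (fun k _ => by simpa using hka k)
    simpa using this
  · intro hred i
    obtain ⟨b, rfl⟩ := hred
    have hzred : ∀ k : Fin t, (∏ j, z j) = z k * ∏ j ∈ Finset.univ.erase k, z j :=
      fun k => (Finset.mul_prod_erase _ _ (Finset.mem_univ k)).symm
    apply my_prod_dvd z hprime hcop n Finset.univ
    intro k _
    set g := ∏ j ∈ Finset.univ.erase k, z j ^ n j with hg
    rw [hfact k, pderiv_mul, pderiv_pow, mul_add]
    apply dvd_add
    · have hpow : z k ^ (n k - 1) * z k = z k ^ n k := by
        rw [← pow_succ]
        congr 1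
        have := hn k
        omega
      refine ⟨(∏ j ∈ Finset.univ.erase k, z j) * b
        * (n k : MvPolynomial (Fin m) ℂ) * pderiv i (z k) * g, ?_⟩
      rw [hzred k, ← hpow]
      ring
    · exact ⟨(∏ j, z j) * b * pderiv i g, by ring⟩

end
end
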